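/- Fix n ≥ 2 and a ≥ 2, and set α = 1 − 1/a. For each 1 ≤ i ≤ n, the quantity Q_a(i) = a^{−n} ∑_{k=1}^{a} (k−1)^{n−i} k^{i−1} (the probability that the bottom card of an n-card deck is at position i from the top after a GSR a-shuffle) satisfies (1/a)·α^{n−i+1}/(1−α^n) ≤ Q_a(i) ≤ (1/a)·α^{n−i}/(1−α^{n−1}). -/

import Mathlib

open Finset

private lemma sum_Icc_one_eq (a : ℕ) (f : ℕ → ℝ) :
    ∑ k ∈ Icc 1 a, f k = ∑ i ∈ range a, f (i + 1) := by
  rw [← Finset.Ico_add_one_right_eq_Icc, Finset.sum_Ico_eq_sum_range]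
  simp [add_comm]

private lemma cast_pos {a : ℕ} (ha : 2 ≤ a) : (0:ℝ) < a := by
  have : (2:ℝ) ≤ a := by exact_mod_cast ha
  linarith

-- key pointwise bound: for 1 ≤ k ≤ a,  (k-1 : ℝ) ≤ (1 - 1/a) * k
private lemma key_pt {a k : ℕ} (ha : 2 ≤ a) (hka : k ≤ a) :
    ((k:ℝ) - 1) ≤ (1 - 1/(a:ℝ)) * k := by
  have hA : (0:ℝ) < a := cast_pos ha
  have hk : (k:ℝ) ≤ a := by exact_mod_cast hka
  have h1 : (k:ℝ)/a ≤ 1 := (div_le_one hA).mpr hk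
  have : (1 - 1/(a:ℝ)) * k = k - k/a := by ring
  rw [this]; linarith

-- geometric sum: ∑_{j<e} α^j = (1 - α^e) * a
private lemma geo_sum {a : ℕ} (ha : 2 ≤ a) (e : ℕ) :
    ∑ j ∈ range e, (1 - 1/(a:ℝ))^j = (1 - (1 - 1/(a:ℝ))^e) * a := by
  have hA : (0:ℝ) < a := cast_pos ha
  have hne : (1 - 1/(a:ℝ)) ≠ 1 := by
    have : 1/(a:ℝ) > 0 := by positivity
    intro h; nlinarith
  rw [geom_sum_eq hne, div_eq_iff (sub_ne_zero.mpr hne)]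
  field_simp
  ring

-- lower bound for power sums: a^d ≤ (1 - α^(d+1)) * ∑_{k=1}^a k^d
private lemma T_lower {a : ℕ} (ha : 2 ≤ a) (d : ℕ) :
    (a:ℝ)^d ≤ (1 - (1 - 1/(a:ℝ))^(d+1)) * ∑ k ∈ Icc 1 a, (k:ℝ)^d := by
  have hA : (0:ℝ) < a := cast_pos ha
  set α : ℝ := 1 - 1/(a:ℝ) with hα
  have tele : ∑ k ∈ Icc 1 a, ((k:ℝ)^(d+1) - ((k:ℝ)-1)^(d+1)) = (a:ℝ)^(d+1) := by
    rw [sum_Icc_one_eq a (fun k => (k:ℝ)^(d+1) - ((k:ℝ)-1)^(d+1))]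
    calc ∑ i ∈ range a, ((((i+1:ℕ)):ℝ)^(d+1) - (((i+1:ℕ):ℝ)-1)^(d+1))
        = ∑ i ∈ range a, (((i+1:ℕ):ℝ)^(d+1) - ((i:ℕ):ℝ)^(d+1)) := by
          refine sum_congr rfl (fun i _ => ?_); push_cast; ring
      _ = ((a:ℕ):ℝ)^(d+1) - ((0:ℕ):ℝ)^(d+1) :=
          Finset.sum_range_sub (fun i => ((i:ℕ):ℝ)^(d+1)) a
      _ = (a:ℝ)^(d+1) := by norm_num
  have expand : ∀ k ∈ Icc 1 a,
      (k:ℝ)^(d+1) - ((k:ℝ)-1)^(d+1) ≤ (1 - α^(d+1)) * a * (k:ℝ)^d := by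
    intro k hk
    obtain ⟨hk1, hka⟩ := mem_Icc.mp hk
    have hk0 : (0:ℝ) ≤ (k:ℝ) - 1 := by
      have : (1:ℝ) ≤ k := by exact_mod_cast hk1
      linarith
    have hkpos : (0:ℝ) ≤ (k:ℝ) := by positivity
    have hgs := geom_sum₂_mul ((k:ℝ)-1) (k:ℝ) (d+1)
    have hid : (k:ℝ)^(d+1) - ((k:ℝ)-1)^(d+1)
        = ∑ j ∈ range (d+1), ((k:ℝ)-1)^j * (k:ℝ)^(d - j) := by
      have h2 : (((k:ℝ)-1) - k) = -1 := by ring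
      rw [h2] at hgs
      have : ∀ j ∈ range (d+1), ((k:ℝ)-1)^j * (k:ℝ)^(d+1-1-j) = ((k:ℝ)-1)^j * (k:ℝ)^(d-j) := by
        intro j _; norm_num
      rw [Finset.sum_congr rfl this] at hgs
      linarith
    rw [hid]
    have term : ∀ j ∈ range (d+1),
        ((k:ℝ)-1)^j * (k:ℝ)^(d - j) ≤ α^j * (k:ℝ)^d := by
      intro j hj
      have hjd : j ≤ d := Nat.lt_succ_iff.mp (mem_range.mp hj)
      have h1 : ((k:ℝ)-1)^j ≤ (α * k)^j := pow_le_pow_left₀ hk0 (key_pt ha hka) j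
      have h2 : ((k:ℝ)-1)^j * (k:ℝ)^(d-j) ≤ (α*k)^j * (k:ℝ)^(d-j) :=
        mul_le_mul_of_nonneg_right h1 (by positivity)
      have h3 : (α*k)^j * (k:ℝ)^(d-j) = α^j * (k:ℝ)^d := by
        rw [mul_pow, mul_assoc, ← pow_add]
        congr 2
        omega
      linarith
    calc ∑ j ∈ range (d+1), ((k:ℝ)-1)^j * (k:ℝ)^(d - j)
        ≤ ∑ j ∈ range (d+1), α^j * (k:ℝ)^d := sum_le_sum term
      _ = (∑ j ∈ range (d+1), α^j) * (k:ℝ)^d := by rw [← sum_mul]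
      _ = (1 - α^(d+1)) * a * (k:ℝ)^d := by rw [geo_sum ha (d+1)]
  have hsum : (a:ℝ)^(d+1) ≤ (1 - α^(d+1)) * a * ∑ k ∈ Icc 1 a, (k:ℝ)^d := by
    rw [← tele]
    calc ∑ k ∈ Icc 1 a, ((k:ℝ)^(d+1) - ((k:ℝ)-1)^(d+1))
        ≤ ∑ k ∈ Icc 1 a, (1 - α^(d+1)) * a * (k:ℝ)^d := sum_le_sum expand
      _ = (1 - α^(d+1)) * a * ∑ k ∈ Icc 1 a, (k:ℝ)^d := by rw [← mul_sum]
  have h4 : (a:ℝ) * (a:ℝ)^d ≤ (a:ℝ) * ((1 - α^(d+1)) * ∑ k ∈ Icc 1 a, (k:ℝ)^d) := by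
    calc (a:ℝ) * (a:ℝ)^d = (a:ℝ)^(d+1) := by ring
      _ ≤ (1 - α^(d+1)) * a * ∑ k ∈ Icc 1 a, (k:ℝ)^d := hsum
      _ = (a:ℝ) * ((1 - α^(d+1)) * ∑ k ∈ Icc 1 a, (k:ℝ)^d) := by ring
  exact le_of_mul_le_mul_left h4 hA

private lemma tele_gen (a e : ℕ) :
    ∑ k ∈ Icc 1 a, ((k:ℝ)^e - ((k:ℝ)-1)^e) = (a:ℝ)^e - (0:ℝ)^e := by
  rw [sum_Icc_one_eq a (fun k => (k:ℝ)^e - ((k:ℝ)-1)^e)]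
  calc ∑ i ∈ range a, ((((i+1:ℕ)):ℝ)^e - (((i+1:ℕ):ℝ)-1)^e)
      = ∑ i ∈ range a, (((i+1:ℕ):ℝ)^e - ((i:ℕ):ℝ)^e) := by
        refine sum_congr rfl (fun i _ => ?_); push_cast; ring
    _ = ((a:ℕ):ℝ)^e - ((0:ℕ):ℝ)^e := Finset.sum_range_sub (fun i => ((i:ℕ):ℝ)^e) a
    _ = (a:ℝ)^e - (0:ℝ)^e := by norm_num

-- upper bound for power sums: (1 - α^e) * ∑_{k=1}^a k^e ≤ a^e, for e ≥ 1
private lemma T_upper {a : ℕ} (ha : 2 ≤ a) {e : ℕ} (he : 1 ≤ e) :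
    (1 - (1 - 1/(a:ℝ))^e) * ∑ k ∈ Icc 1 a, (k:ℝ)^e ≤ (a:ℝ)^e := by
  set α : ℝ := 1 - 1/(a:ℝ) with hα
  have term : ∀ k ∈ Icc 1 a, (1 - α^e) * (k:ℝ)^e ≤ (k:ℝ)^e - ((k:ℝ)-1)^e := by
    intro k hk
    obtain ⟨hk1, hka⟩ := mem_Icc.mp hk
    have hk0 : (0:ℝ) ≤ (k:ℝ) - 1 := by
      have : (1:ℝ) ≤ k := by exact_mod_cast hk1
      linarith
    have h1 : ((k:ℝ)-1)^e ≤ (α * k)^e := pow_le_pow_left₀ hk0 (key_pt ha hka) e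
    have h2 : (α * (k:ℝ))^e = α^e * (k:ℝ)^e := mul_pow _ _ _
    nlinarith
  calc (1 - α^e) * ∑ k ∈ Icc 1 a, (k:ℝ)^e
      = ∑ k ∈ Icc 1 a, (1 - α^e) * (k:ℝ)^e := by rw [mul_sum]
    _ ≤ ∑ k ∈ Icc 1 a, ((k:ℝ)^e - ((k:ℝ)-1)^e) := sum_le_sum term
    _ = (a:ℝ)^e - (0:ℝ)^e := tele_gen a e
    _ ≤ (a:ℝ)^e := by
        have : (0:ℝ) ≤ (0:ℝ)^e := by positivity
        linarith

-- base lemma: α^(d+1) * ∑ k^d ≤ ∑ (k-1)^d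
private lemma B_lemma {a : ℕ} (ha : 2 ≤ a) (d : ℕ) :
    (1 - 1/(a:ℝ))^(d+1) * ∑ k ∈ Icc 1 a, (k:ℝ)^d ≤ ∑ k ∈ Icc 1 a, ((k:ℝ)-1)^d := by
  have h1 := T_lower ha d
  have h2 := tele_gen a d
  have h3 : ∑ k ∈ Icc 1 a, ((k:ℝ)^d - ((k:ℝ)-1)^d)
      = ∑ k ∈ Icc 1 a, (k:ℝ)^d - ∑ k ∈ Icc 1 a, ((k:ℝ)-1)^d := sum_sub_distrib _ _
  have h4 : (0:ℝ) ≤ (0:ℝ)^d := by positivity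
  linarith

-- Chebyshev-type lemma: α^(m+1) * ∑ k^m k^p ≤ ∑ (k-1)^m k^p
private lemma cheb {a : ℕ} (ha : 2 ≤ a) (m p : ℕ) :
    (1 - 1/(a:ℝ))^(m+1) * ∑ k ∈ Icc 1 a, (k:ℝ)^m * (k:ℝ)^p
      ≤ ∑ k ∈ Icc 1 a, ((k:ℝ)-1)^m * (k:ℝ)^p := by
  have hA : (0:ℝ) < a := cast_pos ha
  set α : ℝ := 1 - 1/(a:ℝ) with hα
  have hα0 : 0 ≤ α := by
    have h2 : (2:ℝ) ≤ a := by exact_mod_cast ha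
    have : 1/(a:ℝ) ≤ 1/2 := by
      rw [div_le_div_iff₀ hA (by norm_num)]; linarith
    rw [hα]; linarith
  have hα1 : α ≤ 1 := by
    have : 0 < 1/(a:ℝ) := by positivity
    rw [hα]; linarith
  set g : ℕ → ℝ := fun k => ((k:ℝ)-1)^m - α^(m+1) * (k:ℝ)^m with hg
  have hαA : α * a = (a:ℝ) - 1 := by rw [hα]; field_simp
  have hga : 0 ≤ g a := by
    have h1 : α^(m+1) * (a:ℝ)^m = α * ((a:ℝ)-1)^m := by
      rw [pow_succ, mul_comm (α^m) α, mul_assoc, ← mul_pow, hαA]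
    have h2 : (0:ℝ) ≤ ((a:ℝ)-1)^m := by
      have h3 : (2:ℝ) ≤ a := by exact_mod_cast ha
      exact pow_nonneg (by linarith) m
    show (0:ℝ) ≤ ((a:ℝ)-1)^m - α^(m+1) * (a:ℝ)^m
    nlinarith
  have haF : a ∈ (Icc 1 a).filter (fun k => 0 ≤ g k) :=
    mem_filter.mpr ⟨mem_Icc.mpr ⟨by omega, le_refl a⟩, hga⟩
  set F := (Icc 1 a).filter (fun k => 0 ≤ g k) with hF
  have hne : F.Nonempty := ⟨a, haF⟩
  set K := F.min' hne with hKdef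
  have hKF : K ∈ F := F.min'_mem hne
  obtain ⟨hKIcc, hgK⟩ := mem_filter.mp hKF
  obtain ⟨hK1, hKa⟩ := mem_Icc.mp hKIcc
  have hKr : (1:ℝ) ≤ K := by exact_mod_cast hK1
  have mono : ∀ k ∈ Icc 1 a, K ≤ k → 0 ≤ g k := by
    intro k hk hKk
    obtain ⟨hk1, hka⟩ := mem_Icc.mp hk
    have hkr : (1:ℝ) ≤ k := by exact_mod_cast hk1
    have hKkr : (K:ℝ) ≤ k := by exact_mod_cast hKk
    have hcross : ((K:ℝ)-1) * k ≤ ((k:ℝ)-1) * K := by nlinarith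
    have hp0 : (0:ℝ) ≤ ((K:ℝ)-1) * k := by nlinarith
    have hpow : (((K:ℝ)-1) * k)^m ≤ (((k:ℝ)-1) * K)^m := pow_le_pow_left₀ hp0 hcross m
    rw [mul_pow, mul_pow] at hpow
    have hgK' : α^(m+1) * (K:ℝ)^m ≤ ((K:ℝ)-1)^m := by
      have := hgK; simp only [hg] at this; linarith
    have hkm : (0:ℝ) ≤ (k:ℝ)^m := by positivity
    have hKm : (0:ℝ) < (K:ℝ)^m := by positivity
    have hchain : α^(m+1) * (k:ℝ)^m * (K:ℝ)^m ≤ ((k:ℝ)-1)^m * (K:ℝ)^m := by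
      calc α^(m+1) * (k:ℝ)^m * (K:ℝ)^m = (α^(m+1) * (K:ℝ)^m) * (k:ℝ)^m := by ring
        _ ≤ ((K:ℝ)-1)^m * (k:ℝ)^m := mul_le_mul_of_nonneg_right hgK' hkm
        _ ≤ ((k:ℝ)-1)^m * (K:ℝ)^m := hpow
    have : α^(m+1) * (k:ℝ)^m ≤ ((k:ℝ)-1)^m := le_of_mul_le_mul_right hchain hKm
    simp only [hg]; linarith
  have termwise : ∀ k ∈ Icc 1 a, ((K:ℝ))^p * g k ≤ ((k:ℝ))^p * g k := by
    intro k hk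
    obtain ⟨hk1, hka⟩ := mem_Icc.mp hk
    by_cases hgk : 0 ≤ g k
    · have hkF : k ∈ F := mem_filter.mpr ⟨hk, hgk⟩
      have hKk : K ≤ k := F.min'_le k hkF
      have hle : ((K:ℝ))^p ≤ (k:ℝ)^p := by
        apply pow_le_pow_left₀ (by positivity)
        exact_mod_cast hKk
      exact mul_le_mul_of_nonneg_right hle hgk
    · push_neg at hgk
      have hkK : k ≤ K := by
        by_contra h
        push_neg at h
        exact absurd (mono k hk h.le) (not_le.mpr hgk)
      have hle : ((k:ℝ))^p ≤ (K:ℝ)^p := by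
        apply pow_le_pow_left₀ (by positivity)
        exact_mod_cast hkK
      exact mul_le_mul_of_nonpos_right hle hgk.le
  have sumg : 0 ≤ ∑ k ∈ Icc 1 a, g k := by
    have hexp : ∑ k ∈ Icc 1 a, g k
        = ∑ k ∈ Icc 1 a, ((k:ℝ)-1)^m - α^(m+1) * ∑ k ∈ Icc 1 a, (k:ℝ)^m := by
      simp only [hg]
      rw [sum_sub_distrib, mul_sum]
    rw [hexp]
    have := B_lemma ha m
    linarith
  have hKp : (0:ℝ) ≤ (K:ℝ)^p := by positivity
  have h5 : 0 ≤ ∑ k ∈ Icc 1 a, (k:ℝ)^p * g k := by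
    calc (0:ℝ) ≤ (K:ℝ)^p * ∑ k ∈ Icc 1 a, g k := mul_nonneg hKp sumg
      _ = ∑ k ∈ Icc 1 a, (K:ℝ)^p * g k := mul_sum _ _ _
      _ ≤ ∑ k ∈ Icc 1 a, (k:ℝ)^p * g k := sum_le_sum termwise
  have h6 : ∑ k ∈ Icc 1 a, (k:ℝ)^p * g k
      = ∑ k ∈ Icc 1 a, ((k:ℝ)-1)^m * (k:ℝ)^p
        - α^(m+1) * ∑ k ∈ Icc 1 a, (k:ℝ)^m * (k:ℝ)^p := by
    rw [mul_sum, ← sum_sub_distrib]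
    refine sum_congr rfl (fun k _ => ?_)
    simp only [hg]; ring
  linarith



/-- Bounds on the position of the bottom card after an `a`-shuffle: with `α = 1 - 1/a`,
`(1/a)·α^{n-i+1}/(1-α^n) ≤ Q_a(i) ≤ (1/a)·α^{n-i}/(1-α^{n-1})`, where
`Q_a(i) = a^{-n} ∑_{k=1}^{a} (k-1)^{n-i} k^{i-1}` is the chance that the bottom card of an
`n`-card deck is at position `i` from the top after a GSR `a`-shuffle. -/
theorem bottom_card_position_bounds (n a : ℕ) (hn : 2 ≤ n) (ha : 2 ≤ a)
    (i : ℕ) (hi1 : 1 ≤ i) (hin : i ≤ n) :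
    (1 / (a : ℝ)) * (1 - 1 / (a : ℝ)) ^ (n - i + 1) / (1 - (1 - 1 / (a : ℝ)) ^ n)
      ≤ ((∑ k ∈ Finset.Icc 1 a, (k - 1) ^ (n - i) * k ^ (i - 1) : ℕ) : ℝ) / (a : ℝ) ^ n
    ∧ ((∑ k ∈ Finset.Icc 1 a, (k - 1) ^ (n - i) * k ^ (i - 1) : ℕ) : ℝ) / (a : ℝ) ^ n
      ≤ (1 / (a : ℝ)) * (1 - 1 / (a : ℝ)) ^ (n - i) / (1 - (1 - 1 / (a : ℝ)) ^ (n - 1)) := by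
  have hA : (0:ℝ) < a := cast_pos ha
  have hA2 : (2:ℝ) ≤ a := by exact_mod_cast ha
  set α : ℝ := 1 - 1/(a:ℝ) with hα
  have hα0 : 0 ≤ α := by
    have : 1/(a:ℝ) ≤ 1/2 := by
      rw [div_le_div_iff₀ hA (by norm_num)]; linarith
    rw [hα]; linarith
  have hα1 : α < 1 := by
    have : 0 < 1/(a:ℝ) := by positivity
    rw [hα]; linarith
  have hαn : 0 < 1 - α^n := by
    have := pow_lt_one₀ hα0 hα1 (by omega : n ≠ 0)
    linarith
  have hαn1 : 0 < 1 - α^(n-1) := by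
    have := pow_lt_one₀ hα0 hα1 (by omega : n - 1 ≠ 0)
    linarith
  set m := n - i with hm
  set p := i - 1 with hp
  have hmp : m + p = n - 1 := by omega
  set T := ∑ k ∈ Icc 1 a, (k:ℝ)^(n-1) with hT
  set S := ∑ k ∈ Icc 1 a, ((k:ℝ)-1)^m * (k:ℝ)^p with hS
  have hcast : ((∑ k ∈ Finset.Icc 1 a, (k - 1) ^ m * k ^ p : ℕ) : ℝ) = S := by
    rw [hS, Nat.cast_sum]
    refine sum_congr rfl (fun k hk => ?_)
    obtain ⟨hk1, _⟩ := mem_Icc.mp hk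
    rw [Nat.cast_mul, Nat.cast_pow, Nat.cast_pow, Nat.cast_sub hk1, Nat.cast_one]
  have hTm : ∑ k ∈ Icc 1 a, (k:ℝ)^m * (k:ℝ)^p = T := by
    refine sum_congr rfl (fun k _ => ?_)
    rw [← pow_add, hmp]
  have hST : α^(m+1) * T ≤ S := by
    rw [← hTm]; exact cheb ha m p
  have hTlow : (a:ℝ)^(n-1) ≤ (1 - α^n) * T := by
    have h := T_lower ha (n-1)
    have hn1 : n - 1 + 1 = n := by omega
    rwa [hn1] at h
  have hTup : (1 - α^(n-1)) * T ≤ (a:ℝ)^(n-1) := T_upper ha (by omega)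
  have hSup : S ≤ α^m * T := by
    rw [hS, hT, mul_sum]
    refine sum_le_sum (fun k hk => ?_)
    obtain ⟨hk1, hka⟩ := mem_Icc.mp hk
    have hk0 : (0:ℝ) ≤ (k:ℝ)-1 := by
      have : (1:ℝ) ≤ k := by exact_mod_cast hk1
      linarith
    have h1 : ((k:ℝ)-1)^m ≤ (α*k)^m := pow_le_pow_left₀ hk0 (key_pt ha hka) m
    calc ((k:ℝ)-1)^m * (k:ℝ)^p ≤ (α*k)^m * (k:ℝ)^p :=
          mul_le_mul_of_nonneg_right h1 (by positivity)
      _ = α^m * (k:ℝ)^(n-1) := by rw [mul_pow, mul_assoc, ← pow_add, hmp]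
  have hpowa : (a:ℝ)^(n-1) * a = (a:ℝ)^n := by
    rw [← pow_succ]; congr 1; omega
  constructor
  · rw [hcast, div_le_div_iff₀ hαn (by positivity)]
    have hm1 : (0:ℝ) ≤ α^(m+1) := pow_nonneg hα0 _
    calc 1/(a:ℝ) * α^(m+1) * (a:ℝ)^n = α^(m+1) * (a:ℝ)^(n-1) := by
          rw [← hpowa]; field_simp
      _ ≤ α^(m+1) * ((1 - α^n) * T) := mul_le_mul_of_nonneg_left hTlow hm1
      _ = (α^(m+1) * T) * (1 - α^n) := by ring
      _ ≤ S * (1 - α^n) := mul_le_mul_of_nonneg_right hST hαn.le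
  · rw [hcast, div_le_div_iff₀ (by positivity) hαn1]
    have hm0 : (0:ℝ) ≤ α^m := pow_nonneg hα0 _
    calc S * (1 - α^(n-1)) ≤ (α^m * T) * (1 - α^(n-1)) :=
          mul_le_mul_of_nonneg_right hSup hαn1.le
      _ = α^m * ((1 - α^(n-1)) * T) := by ring
      _ ≤ α^m * (a:ℝ)^(n-1) := mul_le_mul_of_nonneg_left hTup hm0
      _ = 1/(a:ℝ) * α^m * (a:ℝ)^n := by rw [← hpowa]; field_simp
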